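/- Let P ⊆ ℝ^n be the convex hull of a finite set of points and suppose P has nonempty interior. Let P′ = (n+2)·P = {(n+2)p : p ∈ P}. Then for every point x in the interior of P′ there exists α ∈ ℝ^n such that x is an extreme point of the translate α + P = {α + p : p ∈ P} and α + P is contained in the interior of P′. -/

import Mathlib

open scoped Pointwise

lemma translate_extremePoint {n : ℕ} {P : Set (Fin n → ℝ)} {a v : Fin n → ℝ}
    (hv : v ∈ Set.extremePoints ℝ P) :
    a + v ∈ Set.extremePoints ℝ ((fun p => a + p) '' P) := by
  obtain ⟨hvP, hv2⟩ := hv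
  refine ⟨⟨v, hvP, rfl⟩, ?_⟩
  rintro _ ⟨p₁, hp₁, rfl⟩ _ ⟨p₂, hp₂, rfl⟩ hseg
  obtain ⟨b, c, hb, hc, hbc, h⟩ := hseg
  have hv' : v ∈ openSegment ℝ p₁ p₂ := by
    refine ⟨b, c, hb, hc, hbc, ?_⟩
    have heq : b • (a + p₁) + c • (a + p₂) = a + (b • p₁ + c • p₂) := by
      rw [smul_add, smul_add, show b • a + b • p₁ + (c • a + c • p₂)
        = (b + c) • a + (b • p₁ + c • p₂) by rw [add_smul]; abel, hbc, one_smul]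
    rw [heq] at h
    exact add_left_cancel h
  have h1 := hv2 hp₁ hp₂ hv'
  subst h1
  rfl

/-- **The homothety lemma for polytopes** : let `P ⊆ ℝ^n` be the convex hull of a finite
set of points with nonempty interior and let `P' = (n+2)·P`. Then every point `x` of the
interior of `P'` is an extreme point of a translate `α + P` of `P` contained in the
interior of `P'`. -/
theorem polytope_translate_extreme_point (n : ℕ) (s : Finset (Fin n → ℝ))
    (P : Set (Fin n → ℝ)) (hP : P = convexHull ℝ (s : Set (Fin n → ℝ)))
    (hint : (interior P).Nonempty) :
    ∀ x ∈ interior (((n : ℝ) + 2) • P),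
      ∃ α : Fin n → ℝ,
        x ∈ Set.extremePoints ℝ ((fun p => α + p) '' P) ∧
        (fun p => α + p) '' P ⊆ interior (((n : ℝ) + 2) • P) := by
  intro x hx
  have hconv : Convex ℝ P := hP ▸ convex_convexHull ℝ _
  have hcomp : IsCompact P := hP ▸ s.finite_toSet.isCompact_convexHull ℝ
  have hc0 : (0:ℝ) < (n : ℝ) + 2 := by positivity
  rw [interior_smul₀ hc0.ne' P] at hx
  obtain ⟨y, hy, rfl⟩ := hx
  set E := Set.extremePoints ℝ P with hE
  have hEP : E ⊆ P := extremePoints_subset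
  have hEs : E ⊆ ↑s := by rw [hE, hP]; exact extremePoints_convexHull_subset
  have hEfin : E.Finite := s.finite_toSet.subset hEs
  have hPE : P = convexHull ℝ E := by
    refine le_antisymm ?_ (convexHull_min hEP hconv)
    conv_lhs => rw [← closure_convexHull_extremePoints hcomp hconv]
    exact closure_minimal le_rfl (hEfin.isCompact_convexHull ℝ).isClosed
  have hy' : y ∈ convexHull ℝ E := hPE ▸ interior_subset hy
  rw [convexHull_eq_union] at hy'
  simp only [Set.mem_iUnion] at hy'
  obtain ⟨t, hts, hai, hyt⟩ := hy'
  rw [Finset.convexHull_eq] at hyt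
  obtain ⟨w, hw0, hw1, hwy⟩ := hyt
  have hyc : ∑ i ∈ t, w i • i = y := by
    rw [t.centerMass_eq_of_sum_1 id hw1] at hwy; simpa using hwy
  have htne : t.Nonempty := by
    rcases Finset.eq_empty_or_nonempty t with h | h
    · exfalso; rw [h] at hw1; simp at hw1
    · exact h
  -- card bound
  have hcard : (t.card : ℝ) ≤ (n : ℝ) + 1 := by
    have h1 := hai.card_le_finrank_succ
    have h2 : Module.finrank ℝ (vectorSpan ℝ (Set.range ((↑) : t → (Fin n → ℝ)))) ≤ n := by
      have := Submodule.finrank_le (vectorSpan ℝ (Set.range ((↑) : t → (Fin n → ℝ))))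
      rwa [Module.finrank_fin_fun] at this
    have h3 : t.card ≤ n + 1 := by
      have := h1.trans (Nat.add_le_add_right h2 1)
      simpa [Fintype.card_coe] using this
    exact_mod_cast h3
  -- a vertex with big weight
  obtain ⟨v, hvt, hv⟩ : ∃ v ∈ t, 1 / ((n : ℝ) + 1) ≤ w v := by
    by_contra hcon
    push_neg at hcon
    have hlt : ∑ i ∈ t, w i < ∑ _i ∈ t, 1 / ((n : ℝ) + 1) :=
      Finset.sum_lt_sum_of_nonempty htne hcon
    rw [hw1, Finset.sum_const, nsmul_eq_mul] at hlt
    have hn1 : (0:ℝ) < (n : ℝ) + 1 := by positivity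
    have : (t.card : ℝ) * (1 / ((n : ℝ) + 1)) ≤ 1 := by
      rw [mul_one_div, div_le_one hn1]; exact hcard
    linarith
  have hwv0 : 0 < w v := lt_of_lt_of_le (by positivity) hv
  have hvE : v ∈ E := hts hvt
  refine ⟨((n : ℝ) + 2) • y - v, ?_, ?_⟩
  · have := translate_extremePoint (a := ((n : ℝ) + 2) • y - v) hvE
    rwa [sub_add_cancel] at this
  · rintro _ ⟨p, hp, rfl⟩
    simp only
    rw [interior_smul₀ hc0.ne' P]
    set r : ℝ := 1 / (((n : ℝ) + 2) * w v) with hr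
    have hr0 : 0 < r := by positivity
    have hr1 : r < 1 := by
      rw [hr, div_lt_one (by positivity)]
      have : ((n : ℝ) + 2) * (1 / ((n : ℝ) + 1)) ≤ ((n : ℝ) + 2) * w v :=
        mul_le_mul_of_nonneg_left hv (by positivity)
      have h2 : (1 : ℝ) < ((n : ℝ) + 2) * (1 / ((n : ℝ) + 1)) := by
        rw [mul_one_div, lt_div_iff₀ (by positivity)]; linarith
      linarith
    set q : Fin n → ℝ := ∑ i ∈ t, w i • (if i = v then p else (i : Fin n → ℝ)) with hq
    have hqP : q ∈ P := by
      refine hconv.sum_mem (fun i hi => hw0 i hi) hw1 (fun i hi => ?_)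
      split_ifs
      · exact hp
      · exact hEP (hts hi)
    have hqy : q = y + w v • (p - v) := by
      have : q - y = w v • (p - v) := by
        rw [hq, ← hyc, ← Finset.sum_sub_distrib]
        rw [Finset.sum_eq_single v]
        · rw [if_pos rfl, ← smul_sub]
        · intro i _ hiv
          rw [if_neg hiv, sub_self]
        · intro h; exact absurd hvt h
      rw [sub_eq_iff_eq_add] at this
      rw [this]; abel
    have hz : (1 - r) • y + r • q ∈ interior P :=
      hconv.combo_interior_self_mem_interior hy hqP (by linarith) hr0.le (by ring)
    have key : ((n : ℝ) + 2) • ((1 - r) • y + r • q) = ((n : ℝ) + 2) • y - v + p := by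
      rw [hqy, hr]
      have hwv : w v ≠ 0 := hwv0.ne'
      have hn2 : ((n : ℝ) + 2) ≠ 0 := hc0.ne'
      match_scalars <;> field_simp <;> ring
    rw [← key]
    exact Set.smul_mem_smul_set hz
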